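/- For every β > 0, the function W_β : GL⁺(2) → ℝ defined by W_β(F) = ( (1/2)·(log(K(F) + √(K(F)² − 1)))² )^{β/2}, where K(F) = ‖F‖²/(2·det F) with the Frobenius norm, is neither rank-one convex nor polyconvex on GL⁺(2). -/

import Mathlib

open Matrix Set

noncomputable section

/-- The space of real 2×2 matrices. -/
abbrev Mat2 : Type := Matrix (Fin 2) (Fin 2) ℝ

/-- The special orthogonal group SO(2): orthogonal 2×2 matrices with determinant 1. -/
def SO2 : Set Mat2 := {Q : Mat2 | Qᵀ * Q = 1 ∧ Q.det = 1}

/-- A function `W` (viewed on GL⁺(2) = {F | 0 < det F}) is polyconvex if there is a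
convex function `P : ℝ^{2×2} × ℝ → ℝ ∪ {+∞}` with `W F = P (F, det F)` on GL⁺(2). -/
def Polyconvex (W : Mat2 → ℝ) : Prop :=
  ∃ P : Mat2 × ℝ → EReal,
    (∀ x y : Mat2 × ℝ, ∀ a b : ℝ, 0 ≤ a → 0 ≤ b → a + b = 1 →
      P (a • x + b • y) ≤ (a : EReal) * P x + (b : EReal) * P y) ∧
    (∀ F : Mat2, 0 < F.det → (W F : EReal) = P (F, F.det))

/-- Rank-one convexity of `W` on GL⁺(2): convexity along rank-one line segments
lying in GL⁺(2). -/
def RankOneConvex (W : Mat2 → ℝ) : Prop :=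
  ∀ F : Mat2, 0 < F.det → ∀ ξ η : Fin 2 → ℝ, ∀ θ : ℝ, θ ∈ Set.Icc (0:ℝ) 1 →
    (∀ t ∈ Set.Icc (0:ℝ) 1, 0 < (F + t • vecMulVec ξ η).det) →
    W (F + (1 - θ) • vecMulVec ξ η) ≤ θ * W F + (1 - θ) * W (F + vecMulVec ξ η)

/-- Objectivity and isotropy: bi-SO(2)-invariance on GL⁺(2). -/
def ObjectiveIsotropic (W : Mat2 → ℝ) : Prop :=
  ∀ F : Mat2, 0 < F.det → ∀ Q₁ Q₂ : Mat2, Q₁ ∈ SO2 → Q₂ ∈ SO2 →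
    W (Q₁ * F * Q₂) = W F

/-- Isochoric: invariance under positive scaling on GL⁺(2). -/
def Isochoric (W : Mat2 → ℝ) : Prop :=
  ∀ F : Mat2, 0 < F.det → ∀ a : ℝ, 0 < a → W (a • F) = W F

/-- The 2×2 diagonal matrix diag(a, b). -/
def diag2 (a b : ℝ) : Mat2 := !![a, 0; 0, b]

/-- The squared Frobenius norm of a 2×2 matrix. -/
def frobSq (F : Mat2) : ℝ := ∑ i, ∑ j, (F i j) ^ 2

/-- The operator norm of `F` induced by the Euclidean norm on ℝ²:
the supremum of ‖F·x‖ over Euclidean-unit vectors x. -/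
def opNorm2 (F : Mat2) : ℝ :=
  sSup {r : ℝ | ∃ x : Fin 2 → ℝ, (x 0) ^ 2 + (x 1) ^ 2 = 1 ∧
    r = Real.sqrt ((F.mulVec x 0) ^ 2 + (F.mulVec x 1) ^ 2)}

/-- The planar distortion `K(F) = ‖F‖²/(2 det F)`. -/
def distortionK (F : Mat2) : ℝ := frobSq F / (2 * F.det)

/-! ### Auxiliary lemmas -/

lemma aux_hasDeriv1 (β c : ℝ) (hc : 1 < c) :
    HasDerivAt (fun x => Real.log x ^ β) (c⁻¹ * β * Real.log c ^ (β - 1)) c := by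
  have hlog : HasDerivAt Real.log c⁻¹ c := Real.hasDerivAt_log (by linarith)
  exact hlog.rpow_const (Or.inl (ne_of_gt (Real.log_pos hc)))

lemma aux_hasDeriv2 (β c : ℝ) (hc : 1 < c) :
    HasDerivAt (fun x => x⁻¹ * β * Real.log x ^ (β - 1))
      (β * ((β - 1) * Real.log c ^ (β - 1 - 1) * c⁻¹ * c⁻¹ +
        Real.log c ^ (β - 1) * (-(c ^ 2)⁻¹))) c := by
  have hlog : HasDerivAt Real.log c⁻¹ c := Real.hasDerivAt_log (by linarith)
  have h1 : HasDerivAt (fun x => Real.log x ^ (β - 1))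
      (c⁻¹ * (β - 1) * Real.log c ^ (β - 1 - 1)) c :=
    hlog.rpow_const (Or.inl (ne_of_gt (Real.log_pos hc)))
  have h2 : HasDerivAt (fun x : ℝ => x⁻¹ * β) (-(c ^ 2)⁻¹ * β) c :=
    (hasDerivAt_inv (by linarith)).mul_const β
  have : HasDerivAt (fun x => x⁻¹ * β * Real.log x ^ (β - 1))
      (-(c ^ 2)⁻¹ * β * Real.log c ^ (β - 1) + c⁻¹ * β * (c⁻¹ * (β - 1) * Real.log c ^ (β - 1 - 1))) c :=
    h2.mul h1
  convert this using 1
  ring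

lemma aux_deriv2_neg (β c : ℝ) (hβ : 0 < β) (hc : 1 < c) (hL : β < Real.log c) :
    β * ((β - 1) * Real.log c ^ (β - 1 - 1) * c⁻¹ * c⁻¹ +
      Real.log c ^ (β - 1) * (-(c ^ 2)⁻¹)) < 0 := by
  set L := Real.log c with hLdef
  have hL0 : 0 < L := lt_trans hβ hL
  have hP : 0 < L ^ (β - 1 - 1) := Real.rpow_pos_of_pos hL0 _
  have hrw : L ^ (β - 1) = L ^ (β - 1 - 1) * L := by
    rw [← Real.rpow_add_one (ne_of_gt hL0)]; ring_nf
  have hc0 : (0:ℝ) < c⁻¹ := by positivity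
  rw [hrw, sq, mul_inv]
  have key : (β - 1) * L ^ (β - 1 - 1) * c⁻¹ * c⁻¹ + L ^ (β - 1 - 1) * L * -(c⁻¹ * c⁻¹)
      = (c⁻¹ * c⁻¹ * L ^ (β - 1 - 1)) * ((β - 1) - L) := by ring
  rw [key]
  exact mul_neg_of_pos_of_neg hβ (mul_neg_of_pos_of_neg (by positivity) (by linarith))

lemma aux_strictConcave (β : ℝ) (hβ : 0 < β) :
    StrictConcaveOn ℝ (Ici (Real.exp β)) (fun c => Real.log c ^ β) := by
  have ha : (1:ℝ) < Real.exp β := Real.one_lt_exp_iff.2 hβ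
  apply strictConcaveOn_of_deriv2_neg (convex_Ici _)
  · apply ContinuousOn.rpow_const
    · exact Real.continuousOn_log.mono (fun x hx =>
        ne_of_gt (lt_of_lt_of_le (by linarith) hx))
    · exact fun x _ => Or.inr hβ.le
  · intro x hx
    rw [interior_Ici] at hx
    have hx1 : (1:ℝ) < x := lt_trans ha hx
    have hL : β < Real.log x := by
      have := Real.log_lt_log (Real.exp_pos β) hx
      rwa [Real.log_exp] at this
    have e1 : ∀ y ∈ Ioi (1:ℝ),
        deriv (fun c => Real.log c ^ β) y = y⁻¹ * β * Real.log y ^ (β - 1) :=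
      fun y hy => (aux_hasDeriv1 β y hy).deriv
    have e2 : deriv (deriv (fun c => Real.log c ^ β)) x
        = β * ((β - 1) * Real.log x ^ (β - 1 - 1) * x⁻¹ * x⁻¹ +
            Real.log x ^ (β - 1) * (-(x ^ 2)⁻¹)) := by
      have hev : deriv (fun c => Real.log c ^ β)
          =ᶠ[nhds x] fun y => y⁻¹ * β * Real.log y ^ (β - 1) :=
        Filter.eventually_of_mem (isOpen_Ioi.mem_nhds hx1) e1
      rw [hev.deriv_eq]
      exact (aux_hasDeriv2 β x hx1).deriv
    show deriv^[2] (fun c => Real.log c ^ β) x < 0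
    rw [show deriv^[2] (fun c => Real.log c ^ β) x
        = deriv (deriv (fun c => Real.log c ^ β)) x from rfl, e2]
    exact aux_deriv2_neg β x hβ hx1 hL

lemma aux_keyineq (β : ℝ) (hβ : 0 < β) :
    (1/2 : ℝ) * Real.log (Real.exp β) ^ β + (1/2) * Real.log (Real.exp β + 1) ^ β
      < Real.log (Real.exp β + 1/2) ^ β := by
  have h2 := (aux_strictConcave β hβ).2
  have h := h2 (self_mem_Ici)
    (show Real.exp β + 1 ∈ Ici (Real.exp β) by simp)
    (by linarith) (show (0:ℝ) < 1/2 by norm_num) (show (0:ℝ) < 1/2 by norm_num) (by norm_num)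
  have hmid : (1/2 : ℝ) • Real.exp β + (1/2 : ℝ) • (Real.exp β + 1) = Real.exp β + 1/2 := by
    simp only [smul_eq_mul]; ring
  rw [hmid] at h
  simpa [smul_eq_mul] using h

lemma aux_det (c : ℝ) : (!![c, 0; 0, 1] : Mat2).det = c := by
  simp [Matrix.det_fin_two_of]

lemma aux_addM (c t : ℝ) :
    (!![c, 0; 0, 1] : Mat2) + t • (!![1, 0; 0, 0] : Mat2) = !![c + t, 0; 0, 1] := by
  ext i j; fin_cases i <;> fin_cases j <;> simp

lemma aux_vecMulVec : vecMulVec ![(1:ℝ), 0] ![1, 0] = (!![1, 0; 0, 0] : Mat2) := by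
  ext i j; fin_cases i <;> fin_cases j <;> simp [vecMulVec]

lemma aux_Kplus (c : ℝ) (hc : 1 ≤ c) :
    distortionK !![c, 0; 0, 1] +
      Real.sqrt ((distortionK !![c, 0; 0, 1]) ^ 2 - 1) = c := by
  have hc0 : (0:ℝ) < c := by linarith
  have hfrob : frobSq !![c, 0; 0, 1] = c ^ 2 + 1 := by
    simp [frobSq, Fin.sum_univ_two]
  have hK : distortionK !![c, 0; 0, 1] = (c ^ 2 + 1) / (2 * c) := by
    rw [distortionK, aux_det, hfrob]
  rw [hK]
  have h1 : ((c ^ 2 + 1) / (2 * c)) ^ 2 - 1 = ((c ^ 2 - 1) / (2 * c)) ^ 2 := by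
    field_simp; ring
  rw [h1, Real.sqrt_sq (by
    apply div_nonneg _ (by linarith)
    nlinarith)]
  field_simp; ring

lemma aux_Wval (β c : ℝ) (hβ : 0 ≤ β) (hc : 1 ≤ c) :
    ((1/2) * (Real.log (distortionK !![c, 0; 0, 1] +
        Real.sqrt ((distortionK !![c, 0; 0, 1]) ^ 2 - 1))) ^ 2) ^ (β / 2)
      = (1/2 : ℝ) ^ (β / 2) * Real.log c ^ β := by
  rw [aux_Kplus c hc]
  have hl : (0:ℝ) ≤ Real.log c := Real.log_nonneg hc
  rw [Real.mul_rpow (by norm_num) (by positivity)]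
  congr 1
  rw [← Real.rpow_natCast (Real.log c) 2, ← Real.rpow_mul hl,
    show ((2:ℕ):ℝ) * (β / 2) = β by push_cast; ring]

/-- for every `β > 0`, the energy `‖dev₂ log U‖^β`, written as
`((1/2)·(log(K(F)+√(K(F)²−1)))²)^{β/2}`, is neither rank-one convex nor
polyconvex on GL⁺(2). -/
theorem devLog_power_not_rankOneConvex_not_polyconvex (β : ℝ) (hβ : 0 < β) :
    ¬ RankOneConvex (fun F =>
        ((1/2) * (Real.log (distortionK F + Real.sqrt ((distortionK F) ^ 2 - 1))) ^ 2)
          ^ (β / 2)) ∧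
    ¬ Polyconvex (fun F =>
        ((1/2) * (Real.log (distortionK F + Real.sqrt ((distortionK F) ^ 2 - 1))) ^ 2)
          ^ (β / 2)) := by
  set W : Mat2 → ℝ := fun F =>
    ((1/2) * (Real.log (distortionK F + Real.sqrt ((distortionK F) ^ 2 - 1))) ^ 2)
      ^ (β / 2) with hWdef
  set c₀ : ℝ := Real.exp β with hc₀def
  have hc₀1 : (1:ℝ) < c₀ := Real.one_lt_exp_iff.2 hβ
  -- values of W on the rank-one segment
  have hWc : ∀ c : ℝ, 1 ≤ c →
      W !![c, 0; 0, 1] = (1/2 : ℝ) ^ (β / 2) * Real.log c ^ β := by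
    intro c hc
    rw [hWdef]
    exact aux_Wval β c hβ.le hc
  -- the strict reverse inequality
  have hC : (0:ℝ) < (1/2 : ℝ) ^ (β / 2) := Real.rpow_pos_of_pos (by norm_num) _
  have hstrict : (1/2 : ℝ) * W !![c₀, 0; 0, 1] + (1/2) * W !![c₀ + 1, 0; 0, 1]
      < W !![c₀ + 1/2, 0; 0, 1] := by
    rw [hWc c₀ hc₀1.le, hWc (c₀ + 1) (by linarith), hWc (c₀ + 1/2) (by linarith)]
    have hk := aux_keyineq β hβ
    rw [Real.log_exp] at hk ⊢
    rw [hc₀def]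
    nlinarith [hk, hC]
  constructor
  · -- not rank-one convex
    intro h
    have hdetpos : ∀ t ∈ Set.Icc (0:ℝ) 1,
        0 < ((!![c₀, 0; 0, 1] : Mat2) + t • vecMulVec ![(1:ℝ), 0] ![1, 0]).det := by
      intro t ht
      rw [aux_vecMulVec, aux_addM, aux_det]
      have := ht.1
      linarith
    have h1 := h !![c₀, 0; 0, 1] (by rw [aux_det]; linarith) ![1, 0] ![1, 0] (1/2)
      ⟨by norm_num, by norm_num⟩ hdetpos
    rw [aux_vecMulVec] at h1
    rw [show (1 - (1/2 : ℝ)) = 1/2 by norm_num] at h1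
    rw [aux_addM c₀ (1/2)] at h1
    rw [show (!![c₀, 0; 0, 1] : Mat2) + !![1, 0; 0, 0] = !![c₀ + 1, 0; 0, 1] by
      have := aux_addM c₀ 1; rwa [one_smul] at this] at h1
    linarith
  · -- not polyconvex
    rintro ⟨P, hconv, heq⟩
    have e1 : (W !![c₀, 0; 0, 1] : EReal) = P (!![c₀, 0; 0, 1], c₀) := by
      have h := heq !![c₀, 0; 0, 1] (by rw [aux_det]; linarith)
      rwa [aux_det] at h
    have e2 : (W !![c₀ + 1, 0; 0, 1] : EReal) = P (!![c₀ + 1, 0; 0, 1], c₀ + 1) := by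
      have h := heq !![c₀ + 1, 0; 0, 1] (by rw [aux_det]; linarith)
      rwa [aux_det] at h
    have e3 : (W !![c₀ + 1/2, 0; 0, 1] : EReal) = P (!![c₀ + 1/2, 0; 0, 1], c₀ + 1/2) := by
      have h := heq !![c₀ + 1/2, 0; 0, 1] (by rw [aux_det]; linarith)
      rwa [aux_det] at h
    have hmid : (1/2 : ℝ) • ((!![c₀, 0; 0, 1] : Mat2), c₀)
        + (1/2 : ℝ) • ((!![c₀ + 1, 0; 0, 1] : Mat2), c₀ + 1)
        = ((!![c₀ + 1/2, 0; 0, 1] : Mat2), c₀ + 1/2) := by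
      have hm : (1/2 : ℝ) • (!![c₀, 0; 0, 1] : Mat2)
          + (1/2 : ℝ) • (!![c₀ + 1, 0; 0, 1] : Mat2) = !![c₀ + 1/2, 0; 0, 1] := by
        ext i j; fin_cases i <;> fin_cases j <;> simp <;> ring
      have hr : (1/2 : ℝ) * c₀ + (1/2 : ℝ) * (c₀ + 1) = c₀ + 1/2 := by ring
      simp only [Prod.smul_mk, Prod.mk_add_mk, smul_eq_mul, hr, Prod.mk.injEq]
      exact ⟨hm, trivial⟩
    have h := hconv (!![c₀, 0; 0, 1], c₀) (!![c₀ + 1, 0; 0, 1], c₀ + 1) (1/2) (1/2)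
      (by norm_num) (by norm_num) (by norm_num)
    rw [hmid, ← e1, ← e2, ← e3] at h
    have hcoe : ((1/2 : ℝ) : EReal) * (W !![c₀, 0; 0, 1] : EReal)
        + ((1/2 : ℝ) : EReal) * (W !![c₀ + 1, 0; 0, 1] : EReal)
        = (((1/2 : ℝ) * W !![c₀, 0; 0, 1] + (1/2) * W !![c₀ + 1, 0; 0, 1] : ℝ) : EReal) := by
      rw [← EReal.coe_mul, ← EReal.coe_mul, ← EReal.coe_add]
    rw [hcoe] at h
    have := EReal.coe_le_coe_iff.mp h
    linarith
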